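/- Let p = nk+δ be a prime with n ≥ 4, k ≥ 1, and 2 ≤ δ ≤ n-1. Then the rational number ∏_{t=0}^{k} C((n-1)k+1+t, k+1) / ∏_{t=0}^{k} C(k+1+t, k+1) is nonzero modulo p; equivalently, the (k+1)×(k+1) matrix over F_p with (i,j) entry C((n-1)k+1, k+1-i+j) mod p is invertible. -/
import Mathlib


open Finset

open Nat

private lemma factCastNeZero (p m : ℕ) [Fact p.Prime] (h : m < p) :
    ((m ! : ℕ) : ZMod p) ≠ 0 := by
  rw [Ne, ZMod.natCast_eq_zero_iff]
  intro hdvd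
  have := (Nat.Prime.dvd_factorial (Fact.out)).mp hdvd
  omega

private lemma chooseCastNeZero (p m r : ℕ) [Fact p.Prime] (hm : m < p) (hr : r ≤ m) :
    ((m.choose r : ℕ) : ZMod p) ≠ 0 := by
  rw [Ne, ZMod.natCast_eq_zero_iff]
  intro hdvd
  have hd : m.choose r ∣ m ! := ⟨r ! * (m - r)!, by
    rw [← Nat.choose_mul_factorial_mul_factorial hr]; ring⟩
  have := (Nat.Prime.dvd_factorial (Fact.out)).mp (hdvd.trans hd)
  omega

theorem stmt_11 (p n k δ : ℕ) [Fact p.Prime] (hn : 4 ≤ n) (hk : 1 ≤ k)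
    (hδ : 2 ≤ δ) (hδn : δ ≤ n - 1) (hp : p = n * k + δ) :
    (∏ t ∈ Finset.range (k + 1), (((n - 1) * k + 1 + t).choose (k + 1) : ZMod p)) /
        (∏ t ∈ Finset.range (k + 1), ((k + 1 + t).choose (k + 1) : ZMod p)) ≠ 0 ∧
      (Matrix.of fun i j : Fin (k + 1) =>
          ((((n - 1) * k + 1).choose (k + 1 + (j : ℕ) - (i : ℕ)) : ZMod p))).det ≠ 0 := by
  obtain ⟨n', rfl⟩ : ∃ n', n = n' + 4 := ⟨n - 4, by omega⟩
  obtain ⟨δ', rfl⟩ : ∃ δ', δ = δ' + 2 := ⟨δ - 2, by omega⟩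
  have e0 : n' + 4 - 1 = n' + 3 := by omega
  have e1 : (n' + 4 - 1) * k = n' * k + 3 * k := by rw [e0]; ring
  have e2 : (n' + 4) * k = n' * k + 4 * k := by ring
  constructor
  · -- the ratio of products is nonzero
    apply div_ne_zero
    · refine Finset.prod_ne_zero_iff.mpr fun t ht => ?_
      have ht' : t ≤ k := by simpa using Nat.lt_succ_iff.mp (Finset.mem_range.mp ht)
      exact chooseCastNeZero p _ _ (by omega) (by omega)
    · refine Finset.prod_ne_zero_iff.mpr fun t ht => ?_
      have ht' : t ≤ k := by simpa using Nat.lt_succ_iff.mp (Finset.mem_range.mp ht)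
      exact chooseCastNeZero p _ _ (by omega) (by omega)
  · -- the determinant is nonzero
    set d : ℕ := k + δ' with hd
    -- key entrywise congruence
    have key : ∀ r : ℕ, r ≤ 2 * k + 1 →
        (((n' + 4 - 1) * k + 1).choose r : ZMod p)
          = (-1) ^ r * ((d + r).choose d : ZMod p) := by
      intro r hr
      have hfact : ((r ! : ℕ) : ZMod p) ≠ 0 := factCastNeZero p r (by omega)
      apply mul_right_cancel₀ hfact
      have hNcast : (((n' + 4 - 1) * k + 1 : ℕ) : ZMod p) = -((k + δ' + 1 : ℕ) : ZMod p) := by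
        have h0 : ((n' * k + 3 * k + 1 + (k + δ' + 1) : ℕ) : ZMod p) = 0 := by
          rw [show n' * k + 3 * k + 1 + (k + δ' + 1) = p by omega]
          exact ZMod.natCast_self p
        rw [show (n' + 4 - 1) * k + 1 = n' * k + 3 * k + 1 from by rw [e1]]
        push_cast at h0 ⊢
        linear_combination h0
      calc (((n' + 4 - 1) * k + 1).choose r : ZMod p) * (r ! : ZMod p)
          = ((r ! * ((n' + 4 - 1) * k + 1).choose r : ℕ) : ZMod p) := by push_cast; ring
        _ = ((((n' + 4 - 1) * k + 1).descFactorial r : ℕ) : ZMod p) := by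
            rw [← Nat.descFactorial_eq_factorial_mul_choose]
        _ = (descPochhammer (ZMod p) r).eval ((((n' + 4 - 1) * k + 1 : ℕ)) : ZMod p) :=
            (descPochhammer_eval_eq_descFactorial _ _ _).symm
        _ = (ascPochhammer (ZMod p) r).eval (-(((k + δ' + r : ℕ)) : ZMod p)) := by
            rw [descPochhammer_eval_eq_ascPochhammer, hNcast]
            congr 1
            push_cast
            ring
        _ = (-1) ^ r * (descPochhammer (ZMod p) r).eval (((k + δ' + r : ℕ)) : ZMod p) :=
            ascPochhammer_eval_neg_eq_descPochhammer _ _ r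
        _ = (-1) ^ r * (((k + δ' + r).descFactorial r : ℕ) : ZMod p) := by
            rw [descPochhammer_eval_eq_descFactorial]
        _ = (-1) ^ r * ((d + r).choose d : ZMod p) * (r ! : ZMod p) := by
            rw [Nat.descFactorial_eq_factorial_mul_choose,
              show (k + δ' + r).choose r = (d + r).choose d by
                rw [hd, Nat.add_comm d r, Nat.choose_symm_add]]
            push_cast
            ring
    -- the sign-free matrix
    set E : Matrix (Fin (k + 1)) (Fin (k + 1)) (ZMod p) :=
      Matrix.of fun i j => ((d + (k + 1 + (j : ℕ) - (i : ℕ))).choose d : ZMod p) with hE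
    have hdp : d < p := by omega
    have hdfact : ((d ! : ℕ) : ZMod p) ≠ 0 := factCastNeZero p d hdp
    have hdetE : E.det ≠ 0 := by
      intro h0
      obtain ⟨v, hv, hvec⟩ := Matrix.exists_mulVec_eq_zero_iff.mpr h0
      -- build the polynomial
      set G : Polynomial (ZMod p) :=
        ∑ j : Fin (k + 1), Polynomial.C (v j) *
          (descPochhammer (ZMod p) d).comp (Polynomial.X + Polynomial.C ((j : ℕ) : ZMod p))
        with hG
      have heval : ∀ m : ℕ, G.eval ((m : ℕ) : ZMod p)
          = ∑ j : Fin (k + 1), v j * (((m + (j : ℕ)).descFactorial d : ℕ) : ZMod p) := by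
        intro m
        rw [hG, Polynomial.eval_finset_sum]
        refine Finset.sum_congr rfl fun j _ => ?_
        rw [Polynomial.eval_mul, Polynomial.eval_C, Polynomial.eval_comp, Polynomial.eval_add,
          Polynomial.eval_X, Polynomial.eval_C, ← Nat.cast_add,
          descPochhammer_eval_eq_descFactorial]
      have hdeg : G.natDegree ≤ d := by
        refine Polynomial.natDegree_sum_le_of_forall_le _ _ fun j _ => ?_
        refine (Polynomial.natDegree_C_mul_le _ _).trans ?_
        refine (Polynomial.natDegree_comp_le).trans ?_
        rw [descPochhammer_natDegree]
        have : (Polynomial.X + Polynomial.C ((j : ℕ) : ZMod p)).natDegree ≤ 1 :=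
          le_of_eq (Polynomial.natDegree_X_add_C _)
        nlinarith [this]
      -- roots coming from the kernel
      have hroot2 : ∀ i : Fin (k + 1),
          G.eval (((d + k + 1 - (i : ℕ) : ℕ)) : ZMod p) = 0 := by
        intro i
        have hi : (i : ℕ) ≤ k := by omega
        have hvi : ∑ j, E i j * v j = 0 := by
          have := congrFun hvec i
          simpa [Matrix.mulVec, dotProduct] using this
        rw [heval]
        calc ∑ j : Fin (k + 1), v j * (((d + k + 1 - (i : ℕ) + (j : ℕ)).descFactorial d : ℕ) : ZMod p)
            = ∑ j : Fin (k + 1), (d ! : ZMod p) *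
                (((d + (k + 1 + (j : ℕ) - (i : ℕ))).choose d : ZMod p) * v j) := by
              refine Finset.sum_congr rfl fun j _ => ?_
              rw [show d + k + 1 - (i : ℕ) + (j : ℕ) = d + (k + 1 + (j : ℕ) - (i : ℕ)) by omega,
                Nat.descFactorial_eq_factorial_mul_choose]
              push_cast
              ring
          _ = (d ! : ZMod p) * ∑ j : Fin (k + 1),
                ((d + (k + 1 + (j : ℕ) - (i : ℕ))).choose d : ZMod p) * v j := by
              rw [Finset.mul_sum]
          _ = 0 := by rw [show (∑ j : Fin (k + 1),
                ((d + (k + 1 + (j : ℕ) - (i : ℕ))).choose d : ZMod p) * v j) = 0 from hvi,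
                mul_zero]
      -- roots coming from the small values
      have hroot1 : ∀ m : ℕ, m < δ' → G.eval ((m : ℕ) : ZMod p) = 0 := by
        intro m hm
        rw [heval]
        refine Finset.sum_eq_zero fun j _ => ?_
        rw [Nat.descFactorial_of_lt (by omega)]
        simp
      -- G has too many roots, so G = 0
      have hG0 : G = 0 := by
        by_contra hGne
        set T : Finset ℕ := Finset.range δ' ∪ Finset.Icc (d + 1) (d + k + 1) with hT
        have hTlt : ∀ m ∈ T, m < p := by
          intro m hm
          rw [hT, Finset.mem_union, Finset.mem_range, Finset.mem_Icc] at hm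
          omega
        have hTroot : ∀ m ∈ T, G.eval ((m : ℕ) : ZMod p) = 0 := by
          intro m hm
          rw [hT, Finset.mem_union, Finset.mem_range, Finset.mem_Icc] at hm
          rcases hm with hm | hm
          · exact hroot1 m hm
          · have hi : d + k + 1 - m ≤ k := by omega
            have := hroot2 ⟨d + k + 1 - m, by omega⟩
            rw [show d + k + 1 - ((⟨d + k + 1 - m, by omega⟩ : Fin (k + 1)) : ℕ) = m by
              simp; omega] at this
            exact this
        have hcard : (T.image (fun m : ℕ => ((m : ℕ) : ZMod p))).card = T.card := by
          refine Finset.card_image_of_injOn fun a ha b hb hab => ?_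
          have ha' := hTlt a ha
          have hb' := hTlt b hb
          have : ((a : ZMod p)).val = ((b : ZMod p)).val := by rw [hab]
          rwa [ZMod.val_cast_of_lt ha', ZMod.val_cast_of_lt hb'] at this
        have hsub : (T.image (fun m : ℕ => ((m : ℕ) : ZMod p))).val ⊆ G.roots := by
          intro x hx
          simp only [Finset.mem_val, Finset.mem_image] at hx
          obtain ⟨m, hm, rfl⟩ := hx
          rw [Polynomial.mem_roots hGne]
          exact hTroot m hm
        have hle := Polynomial.card_le_degree_of_subset_roots hsub
        rw [hcard] at hle
        have hTcard : T.card = δ' + (k + 1) := by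
          rw [hT, Finset.card_union_of_disjoint, Finset.card_range, Nat.card_Icc]
          · congr 1
            omega
          · rw [Finset.disjoint_left]
            intro a ha hb
            rw [Finset.mem_range] at ha
            rw [Finset.mem_Icc] at hb
            omega
        omega
      -- deduce v = 0
      have hmain : ∀ t : ℕ, ∀ i : Fin (k + 1), k - (i : ℕ) < t → v i = 0 := by
        intro t
        induction t with
        | zero => intro i hi; omega
        | succ t ih =>
          intro i hi
          have h1 : G.eval (((d - (i : ℕ) : ℕ)) : ZMod p) = 0 := by rw [hG0]; simp
          rw [heval] at h1
          have h2 : ∑ j : Fin (k + 1),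
              v j * (((d - (i : ℕ) + (j : ℕ)).descFactorial d : ℕ) : ZMod p)
              = v i * ((d ! : ℕ) : ZMod p) := by
            rw [Finset.sum_eq_single i]
            · rw [show d - (i : ℕ) + (i : ℕ) = d by omega, Nat.descFactorial_self]
            · intro j _ hj
              rcases lt_or_gt_of_ne (fun h : (j : ℕ) = (i : ℕ) => hj (Fin.ext h)) with h | h
              · rw [Nat.descFactorial_of_lt (by omega)]
                simp
              · rw [ih j (by omega)]
                simp
            · intro h
              exact absurd (Finset.mem_univ i) h
          rw [h2, _root_.mul_eq_zero] at h1
          exact h1.resolve_right hdfact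
      exact hv (funext fun i => hmain (k + 1) i (by omega))
    -- factor out the signs
    have hfactor : (Matrix.of fun i j : Fin (k + 1) =>
          ((((n' + 4 - 1) * k + 1).choose (k + 1 + (j : ℕ) - (i : ℕ)) : ZMod p)))
        = Matrix.of (fun i j : Fin (k + 1) => ((-1 : ZMod p) ^ (i : ℕ)) *
            (Matrix.of (fun i j : Fin (k + 1) =>
              ((-1 : ZMod p) ^ (k + 1 + (j : ℕ))) * E i j) i j)) := by
      ext i j
      simp only [Matrix.of_apply]
      rw [key (k + 1 + (j : ℕ) - (i : ℕ)) (by omega)]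
      have hsign : ((-1 : ZMod p)) ^ (k + 1 + (j : ℕ) - (i : ℕ))
          = (-1) ^ ((i : ℕ)) * (-1) ^ (k + 1 + (j : ℕ)) := by
        rw [← pow_add, show (i : ℕ) + (k + 1 + (j : ℕ))
          = (k + 1 + (j : ℕ) - (i : ℕ)) + 2 * (i : ℕ) by omega, pow_add, pow_mul]
        norm_num
      rw [hsign, hE]
      simp only [Matrix.of_apply]
      ring
    rw [hfactor, Matrix.det_mul_column, Matrix.det_mul_row]
    have h1 : (∏ i : Fin (k + 1), ((-1 : ZMod p) ^ (i : ℕ))) ≠ 0 :=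
      Finset.prod_ne_zero_iff.mpr fun i _ => pow_ne_zero _ (neg_ne_zero.mpr one_ne_zero)
    have h2 : (∏ j : Fin (k + 1), ((-1 : ZMod p) ^ (k + 1 + (j : ℕ)))) ≠ 0 :=
      Finset.prod_ne_zero_iff.mpr fun i _ => pow_ne_zero _ (neg_ne_zero.mpr one_ne_zero)
    exact mul_ne_zero h1 (mul_ne_zero h2 hdetE)
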